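/- Invariant of the differentiated reverse sweep: at the beginning of each iteration k of the reverse adjoint-derivative sweep (with ẋ the j-th unit vector), for all p ≤ k, if the adjoint derivative value v̄̇_p is nonzero then j ∈ M_p, where M_p are the sets of the reverse Hessian sparsity algorithm at the corresponding stage. -/

import Mathlib

/-- One step of the reverse Hessian sparsity sweep (Algorithm 6) at node `k`. -/
def step6 (a b : ℕ → ℕ) (LN RN JN d : ℕ → Bool) (X : ℕ → Set ℕ)
    (M : ℕ → Set ℕ) (k : ℕ) : ℕ → Set ℕ :=
  if d k then
    fun p => M p ∪ {q | (p = a k ∨ p = b k) ∧ q ∈ M k}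
      ∪ {q | LN k = true ∧ (p = a k ∨ p = b k) ∧ q ∈ X (a k)}
      ∪ {q | RN k = true ∧ (p = a k ∨ p = b k) ∧ q ∈ X (b k)}
      ∪ {q | JN k = true ∧ p = a k ∧ q ∈ X (b k)}
      ∪ {q | JN k = true ∧ p = b k ∧ q ∈ X (a k)}
  else M

/-- Invariant of the differentiated reverse adjoint sweep (with `ẋ = e_j`):
stage `s` is the beginning of iteration `k = ℓ - s`; `vbdot s p` is the value
`v̄̇_p` then, `vbar s p` is `v̄_p`, `vdot p` is the forward directional
derivative `v̇_p`, `p1,…,p22` are the first and second partials of `φ_k` at the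
evaluation point, and `M s` is the state of Algorithm 6 at the same stage.
At the beginning of each iteration, for all `p ≤ k`, `v̄̇_p ≠ 0 → j ∈ M_p`. -/
theorem stmt_15 (n ℓ : ℕ) (a b : ℕ → ℕ) (hn : n ≤ ℓ)
    (ha : ∀ k, n < k → k ≤ ℓ → a k < k ∧ 1 ≤ a k)
    (hb : ∀ k, n < k → k ≤ ℓ → b k < k ∧ 1 ≤ b k)
    (LN RN JN d : ℕ → Bool) (X : ℕ → Set ℕ) (j : ℕ)
    (p1 p2 p11 p12 p22 : ℕ → ℝ)
    (hLN : ∀ k, LN k = false → p11 k = 0)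
    (hRN : ∀ k, RN k = false → p22 k = 0)
    (hJN : ∀ k, JN k = false → p12 k = 0)
    (vdot : ℕ → ℝ) (hX : ∀ k, vdot k ≠ 0 → j ∈ X k)
    (vbar vbdot : ℕ → ℕ → ℝ)
    (hd : ∀ s k, d k = false → vbar s k = 0 ∧ vbdot s k = 0)
    (hv0 : ∀ p, vbdot 0 p = 0)
    (hupd : ∀ s, s < ℓ - n → ∀ p,
      vbdot (s + 1) p = vbdot s p
        + (if p = a (ℓ - s) then
            p1 (ℓ - s) * vbdot s (ℓ - s)
            + p11 (ℓ - s) * vbar s (ℓ - s) * vdot (a (ℓ - s))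
            + p12 (ℓ - s) * vbar s (ℓ - s) * vdot (b (ℓ - s)) else 0)
        + (if p = b (ℓ - s) then
            p2 (ℓ - s) * vbdot s (ℓ - s)
            + p12 (ℓ - s) * vbar s (ℓ - s) * vdot (a (ℓ - s))
            + p22 (ℓ - s) * vbar s (ℓ - s) * vdot (b (ℓ - s)) else 0))
    (M : ℕ → ℕ → Set ℕ)
    (hM0 : ∀ p, M 0 p = ∅)
    (hMs : ∀ s, s < ℓ - n → M (s + 1) = step6 a b LN RN JN d X (M s) (ℓ - s)) :
    ∀ s, s ≤ ℓ - n → ∀ p, p ≤ ℓ - s → vbdot s p ≠ 0 → j ∈ M s p := by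
  intro s
  induction s with
  | zero =>
    intro _ p _ h
    exact absurd (hv0 p) h
  | succ s ih =>
    intro hs p hp hne
    have hslt : s < ℓ - n := by omega
    have hle : s ≤ ℓ - n := by omega
    set k := ℓ - s with hk
    have h := hupd s hslt p
    rw [hMs s hslt]
    by_cases hdk : d k = true
    · simp only [step6, ← hk, if_pos hdk, Set.mem_union, Set.mem_setOf_eq]
      by_cases h0 : vbdot s p = 0
      swap
      · exact Or.inl (Or.inl (Or.inl (Or.inl (Or.inl (ih hle p (by omega) h0)))))
      rw [h0, zero_add] at h
      rw [h] at hne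
      rcases eq_or_ne (if p = a k then
          p1 k * vbdot s k + p11 k * vbar s k * vdot (a k)
          + p12 k * vbar s k * vdot (b k) else 0) 0 with hA | hA
      · -- B ≠ 0
        have hB : (if p = b k then
            p2 k * vbdot s k + p12 k * vbar s k * vdot (a k)
            + p22 k * vbar s k * vdot (b k) else 0) ≠ 0 := by
          intro hB0; rw [hA, hB0] at hne; simp at hne
        have hpb : p = b k := by
          by_contra h'; rw [if_neg h'] at hB; exact hB rfl
        rw [if_pos hpb] at hB
        have h3 : p2 k * vbdot s k ≠ 0 ∨ p12 k * vbar s k * vdot (a k) ≠ 0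
            ∨ p22 k * vbar s k * vdot (b k) ≠ 0 := by
          by_contra hc; push_neg at hc
          rw [hc.1, hc.2.1, hc.2.2] at hB; simp at hB
        clear hne h
        rcases h3 with t | t | t
        · have hvk : vbdot s k ≠ 0 := right_ne_zero_of_mul t
          exact Or.inl (Or.inl (Or.inl (Or.inl (Or.inr
            ⟨Or.inr hpb, ih hle k (le_refl _) hvk⟩))))
        · have hp12 : p12 k ≠ 0 := left_ne_zero_of_mul (left_ne_zero_of_mul t)
          have hJ : JN k = true := by
            by_contra h'; simp only [Bool.not_eq_true] at h'
            exact hp12 (hJN k h')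
          exact Or.inr ⟨hJ, hpb, hX _ (right_ne_zero_of_mul t)⟩
        · have hp22 : p22 k ≠ 0 := left_ne_zero_of_mul (left_ne_zero_of_mul t)
          have hR : RN k = true := by
            by_contra h'; simp only [Bool.not_eq_true] at h'
            exact hp22 (hRN k h')
          exact Or.inl (Or.inl (Or.inr ⟨hR, Or.inr hpb, hX _ (right_ne_zero_of_mul t)⟩))
      · have hpa : p = a k := by
          by_contra h'; rw [if_neg h'] at hA; exact hA rfl
        rw [if_pos hpa] at hA
        have h3 : p1 k * vbdot s k ≠ 0 ∨ p11 k * vbar s k * vdot (a k) ≠ 0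
            ∨ p12 k * vbar s k * vdot (b k) ≠ 0 := by
          by_contra hc; push_neg at hc
          rw [hc.1, hc.2.1, hc.2.2] at hA; simp at hA
        clear hne h
        rcases h3 with t | t | t
        · have hvk : vbdot s k ≠ 0 := right_ne_zero_of_mul t
          exact Or.inl (Or.inl (Or.inl (Or.inl (Or.inr
            ⟨Or.inl hpa, ih hle k (le_refl _) hvk⟩))))
        · have hp11 : p11 k ≠ 0 := left_ne_zero_of_mul (left_ne_zero_of_mul t)
          have hL : LN k = true := by
            by_contra h'; simp only [Bool.not_eq_true] at h'
            exact hp11 (hLN k h')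
          exact Or.inl (Or.inl (Or.inl (Or.inr ⟨hL, Or.inl hpa, hX _ (right_ne_zero_of_mul t)⟩)))
        · have hp12 : p12 k ≠ 0 := left_ne_zero_of_mul (left_ne_zero_of_mul t)
          have hJ : JN k = true := by
            by_contra h'; simp only [Bool.not_eq_true] at h'
            exact hp12 (hJN k h')
          exact Or.inl (Or.inr ⟨hJ, hpa, hX _ (right_ne_zero_of_mul t)⟩)
    · simp only [Bool.not_eq_true] at hdk
      have hdd := hd s k hdk
      rw [hdd.1, hdd.2] at h
      simp only [mul_zero, zero_mul, add_zero, zero_add, ite_self] at h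
      simp only [step6, ← hk, hdk, Bool.false_eq_true, if_false]
      rw [h] at hne
      exact ih hle p (by omega) hne
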